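/- Consider the three-species system with emission size ℓ = 3: u̇₁ = 4u₂²/M, u̇₂ = −8u₂²/M, u̇₃ = −(6u₁u₃ + 12u₂u₃ + 9u₃²)/M, where M = 4u₂² + 6u₁u₃ + 12u₂u₃ + 9u₃², with initial conditions u₁(0) = p, u₂(0) = q, u₃(0) = r where p, q, r > 0 and p + q + r = 1. Then the unique solution satisfies u₂(t) > 0 and u₃(t) > 0 for every t ∈ [0, t_ex); that is, dimers and trimers exhaust simultaneously at the exhaustion time. -/

import Mathlib

open Finset Filter Topology

/-- A solution of a linear ODE `f' = c t * f` on `[0, b)` with `f 0 > 0`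
stays positive on `[0, b)`. -/
lemma pos_of_linear_ode {f c : ℝ → ℝ} {b : ℝ}
    (hf : ContinuousOn f (Set.Ico 0 b))
    (hc : ContinuousOn c (Set.Ico 0 b))
    (hderiv : ∀ t ∈ Set.Ico (0 : ℝ) b, HasDerivWithinAt f (c t * f t) (Set.Ico 0 b) t)
    (h0 : 0 < f 0) : ∀ t ∈ Set.Ico (0 : ℝ) b, 0 < f t := by
  intro t₀ ht₀
  by_contra h
  push_neg at h
  have hsub : Set.Icc (0 : ℝ) t₀ ⊆ Set.Ico 0 b :=
    fun x hx => ⟨hx.1, lt_of_le_of_lt hx.2 ht₀.2⟩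
  obtain ⟨s, hs, hfs⟩ : ∃ s ∈ Set.Icc (0 : ℝ) t₀, f s = 0 := by
    have hIVT := intermediate_value_Icc' ht₀.1 (hf.mono hsub)
    have h0mem : (0 : ℝ) ∈ Set.Icc (f t₀) (f 0) := ⟨h, le_of_lt h0⟩
    obtain ⟨s, hs, hfs⟩ := hIVT h0mem
    exact ⟨s, hs, hfs⟩
  have hs0 : 0 < s := by
    rcases lt_or_eq_of_le hs.1 with h' | h'
    · exact h'
    · exfalso; rw [← h'] at hfs; rw [hfs] at h0; exact lt_irrefl 0 h0
  have hsubs : Set.Icc (0 : ℝ) s ⊆ Set.Ico 0 b :=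
    fun x hx => ⟨hx.1, lt_of_le_of_lt (hx.2.trans hs.2) ht₀.2⟩
  -- bound c on [0, s]
  obtain ⟨C, hC⟩ : ∃ C, ∀ x ∈ Set.Icc (0 : ℝ) s, ‖c x‖ ≤ C :=
    isCompact_Icc.exists_bound_of_continuousOn (hc.mono hsubs)
  set K : NNReal := ⟨max C 0, le_max_right _ _⟩ with hK
  -- the projection onto [0, s]
  set proj : ℝ → ℝ := fun t => max 0 (min t s) with hproj
  have hprojmem : ∀ t, proj t ∈ Set.Icc (0 : ℝ) s := by
    intro t
    exact ⟨le_max_left _ _, max_le (le_of_lt hs0) (min_le_right _ _)⟩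
  set v : ℝ → ℝ → ℝ := fun t x => c (proj t) * x with hv'
  have hv : ∀ t, LipschitzOnWith K (v t) Set.univ := by
    intro t
    apply LipschitzOnWith.of_dist_le_mul
    intro x _ y _
    have h1 : dist (v t x) (v t y) = ‖c (proj t)‖ * dist x y := by
      simp only [v, Real.dist_eq, Real.norm_eq_abs, ← abs_mul]
      ring_nf
    rw [h1]
    have h2 : ‖c (proj t)‖ ≤ (K : ℝ) := by
      rw [hK]
      exact le_trans (hC _ (hprojmem t)) (le_max_left _ _)
    exact mul_le_mul_of_nonneg_right h2 dist_nonneg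
  have hmem : ∀ t ∈ Set.Ioc (0 : ℝ) s, Set.Ico (0 : ℝ) b ∈ 𝓝[Set.Iic t] t := by
    intro t ht
    apply Filter.mem_of_superset
      (inter_mem self_mem_nhdsWithin (mem_nhdsWithin_of_mem_nhds (Ioi_mem_nhds ht.1)))
    intro x hx
    exact ⟨le_of_lt hx.2, lt_of_le_of_lt (hx.1.trans ht.2) (lt_of_le_of_lt hs.2 ht₀.2)⟩
  have hproj_eq : ∀ t ∈ Set.Ioc (0 : ℝ) s, proj t = t := by
    intro t ht
    simp only [hproj]
    rw [min_eq_left ht.2, max_eq_right (le_of_lt ht.1)]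
  have key : Set.EqOn f (fun _ => (0 : ℝ)) (Set.Icc 0 s) := by
    apply ODE_solution_unique_of_mem_Icc_left (fun t _ => hv t) (hf.mono hsubs)
    · intro t ht
      have hd := hderiv t (hsubs ⟨le_of_lt ht.1, ht.2⟩)
      have : v t (f t) = c t * f t := by rw [hv']; simp only [hproj_eq t ht]
      rw [this]
      exact hd.mono_of_mem_nhdsWithin (hmem t ht)
    · intro t _; exact Set.mem_univ _
    · exact continuousOn_const
    · intro t ht
      have : v t 0 = 0 := by simp [hv']
      rw [this]
      exact hasDerivWithinAt_const t _ 0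
    · intro t _; exact Set.mem_univ _
    · simpa using hfs
  have : f 0 = 0 := key ⟨le_refl 0, le_of_lt hs0⟩
  rw [this] at h0
  exact lt_irrefl 0 h0

/-- simultaneous exhaustion of dimers and trimers: for the
three-species system with emission size `ℓ = 3`,
`u̇₁ = 4u₂²/M`, `u̇₂ = −8u₂²/M`, `u̇₃ = −(6u₁u₃ + 12u₂u₃ + 9u₃²)/M`,
`M = 4u₂² + 6u₁u₃ + 12u₂u₃ + 9u₃²`, with initial data `p, q, r > 0`,
`p + q + r = 1`, the unique solution satisfies `u₂(t) > 0` and `u₃(t) > 0`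
for every `t ∈ [0, t_ex)` (here: on any `[0,b)` on which the solution exists
with `M > 0`, which holds exactly for `b ≤ t_ex`). -/
theorem three_species_simultaneous_exhaustion
    (p q r : ℝ) (hp : 0 < p) (hq : 0 < q) (hr : 0 < r) (hpqr : p + q + r = 1)
    (b : ℝ) (hb : 0 < b) (u₁ u₂ u₃ M : ℝ → ℝ)
    (hM : ∀ t, M t = 4 * u₂ t ^ 2 + 6 * u₁ t * u₃ t + 12 * u₂ t * u₃ t
      + 9 * u₃ t ^ 2)
    (hC1 : ContDiffOn ℝ 1 u₁ (Set.Ico 0 b) ∧ ContDiffOn ℝ 1 u₂ (Set.Ico 0 b) ∧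
      ContDiffOn ℝ 1 u₃ (Set.Ico 0 b))
    (hMpos : ∀ t ∈ Set.Ico (0 : ℝ) b, 0 < M t)
    (hode₁ : ∀ t ∈ Set.Ico (0 : ℝ) b,
      HasDerivWithinAt u₁ (4 * u₂ t ^ 2 / M t) (Set.Ico 0 b) t)
    (hode₂ : ∀ t ∈ Set.Ico (0 : ℝ) b,
      HasDerivWithinAt u₂ (-(8 * u₂ t ^ 2) / M t) (Set.Ico 0 b) t)
    (hode₃ : ∀ t ∈ Set.Ico (0 : ℝ) b,
      HasDerivWithinAt u₃
        (-(6 * u₁ t * u₃ t + 12 * u₂ t * u₃ t + 9 * u₃ t ^ 2) / M t)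
        (Set.Ico 0 b) t)
    (hinit₁ : u₁ 0 = p) (hinit₂ : u₂ 0 = q) (hinit₃ : u₃ 0 = r) :
    ∀ t ∈ Set.Ico (0 : ℝ) b, 0 < u₂ t ∧ 0 < u₃ t := by
  obtain ⟨hC₁, hC₂, hC₃⟩ := hC1
  have hcont₁ := hC₁.continuousOn
  have hcont₂ := hC₂.continuousOn
  have hcont₃ := hC₃.continuousOn
  have hcontM : ContinuousOn M (Set.Ico 0 b) := by
    have : ContinuousOn (fun t => 4 * u₂ t ^ 2 + 6 * u₁ t * u₃ t + 12 * u₂ t * u₃ t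
        + 9 * u₃ t ^ 2) (Set.Ico 0 b) := by
      fun_prop
    exact this.congr fun t _ => hM t
  have hMne : ∀ t ∈ Set.Ico (0 : ℝ) b, M t ≠ 0 := fun t ht => ne_of_gt (hMpos t ht)
  have h0mem : (0 : ℝ) ∈ Set.Ico (0 : ℝ) b := ⟨le_refl 0, hb⟩
  have h2 : ∀ t ∈ Set.Ico (0 : ℝ) b, 0 < u₂ t := by
    refine pos_of_linear_ode hcont₂ (c := fun t => -8 * u₂ t / M t) ?_ ?_ ?_
    · exact (hcont₂.const_smul (-8 : ℝ)).div hcontM hMne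
    · intro t ht
      have hd := hode₂ t ht
      have heq : -(8 * u₂ t ^ 2) / M t = (-8 * u₂ t / M t) * u₂ t := by
        rw [div_mul_eq_mul_div]; ring_nf
      rwa [heq] at hd
    · rw [hinit₂]; exact hq
  have h3 : ∀ t ∈ Set.Ico (0 : ℝ) b, 0 < u₃ t := by
    refine pos_of_linear_ode hcont₃
      (c := fun t => -(6 * u₁ t + 12 * u₂ t + 9 * u₃ t) / M t) ?_ ?_ ?_
    · apply ContinuousOn.div _ hcontM hMne
      fun_prop
    · intro t ht
      have hd := hode₃ t ht
      have heq : -(6 * u₁ t * u₃ t + 12 * u₂ t * u₃ t + 9 * u₃ t ^ 2) / M t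
          = (-(6 * u₁ t + 12 * u₂ t + 9 * u₃ t) / M t) * u₃ t := by
        rw [div_mul_eq_mul_div]; ring_nf
      rwa [heq] at hd
    · rw [hinit₃]; exact hr
  exact fun t ht => ⟨h2 t ht, h3 t ht⟩
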